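/- Let G be a finite simple graph containing adjacent vertices x and y where y has degree 2 in G, and let d ≥ 2. Let G* be the graph obtained from G by deleting the edge {x, y}, adding d - 1 new vertices v_1, ..., v_{d-1}, and adding the edges of the path y, v_1, v_2, ..., v_{d-1}, x (so the edge {x,y} is replaced by a path of length d with new interior vertices). Then G* is well-f-covered if and only if G is well-f-covered, and in either case f(G*) = f(G) + d - 1. -/

import Mathlib

/-- `X` induces a forest in `G`: the subgraph induced by `X` is acyclic. -/
def IsInducedForest {V : Type*} (G : SimpleGraph V) (X : Finset V) : Prop :=
  (G.induce (X : Set V)).IsAcyclic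

/-- `X` is a maximal induced forest of `G`. -/
def IsMaximalInducedForest {V : Type*} (G : SimpleGraph V) (X : Finset V) : Prop :=
  IsInducedForest G X ∧ ∀ Y : Finset V, X ⊂ Y → ¬ IsInducedForest G Y

/-- The forest number of `G`: maximum cardinality of an induced forest. -/
noncomputable def forestNum {V : Type*} (G : SimpleGraph V) : ℕ :=
  sSup {n | ∃ X : Finset V, IsInducedForest G X ∧ X.card = n}

/-- `G` is well-f-covered: all maximal induced forests have the same cardinality. -/
def WellFCovered {V : Type*} (G : SimpleGraph V) : Prop :=
  ∀ X Y : Finset V, IsMaximalInducedForest G X → IsMaximalInducedForest G Y →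
    X.card = Y.card

def IsIndepFinset {V : Type*} (G : SimpleGraph V) (X : Finset V) : Prop :=
  ∀ ⦃u⦄, u ∈ X → ∀ ⦃v⦄, v ∈ X → ¬ G.Adj u v

def IsMaximalIndepSet {V : Type*} (G : SimpleGraph V) (X : Finset V) : Prop :=
  IsIndepFinset G X ∧ ∀ Y : Finset V, X ⊂ Y → ¬ IsIndepFinset G Y

noncomputable def indepNum {V : Type*} (G : SimpleGraph V) : ℕ :=
  sSup {n | ∃ X : Finset V, IsIndepFinset G X ∧ X.card = n}

def WellCovered {V : Type*} (G : SimpleGraph V) : Prop :=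
  ∀ X Y : Finset V, IsMaximalIndepSet G X → IsMaximalIndepSet G Y → X.card = Y.card

/-- The join of two graphs on disjoint vertex sets. -/
def joinGraph {V W : Type*} (G : SimpleGraph V) (H : SimpleGraph W) :
    SimpleGraph (V ⊕ W) where
  Adj a b :=
    match a, b with
    | Sum.inl u, Sum.inl v => G.Adj u v
    | Sum.inr u, Sum.inr v => H.Adj u v
    | Sum.inl _, Sum.inr _ => True
    | Sum.inr _, Sum.inl _ => True
  symm := ⟨by rintro (u|u) (v|v) h <;> first | exact h.symm | trivial⟩
  loopless := ⟨by rintro (u|u) h <;> exact SimpleGraph.irrefl _ h⟩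

/-- The graph obtained from `G` by replacing the edge `{x, y}` by a path of length `d`
through `d - 1` new interior vertices `v_1, ..., v_{d-1}` (indexed by `Fin (d-1)`):
the edge `{x,y}` is deleted, `y` is joined to `v_1`, consecutive `v_i` are joined,
and `v_{d-1}` is joined to `x`. -/
def subdividedGraph {V : Type*} (G : SimpleGraph V) (x y : V) (d : ℕ) :
    SimpleGraph (V ⊕ Fin (d - 1)) :=
  SimpleGraph.fromRel fun a b =>
    match a, b with
    | Sum.inl u, Sum.inl v => G.Adj u v ∧ ¬((u = x ∧ v = y) ∨ (u = y ∧ v = x))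
    | Sum.inl u, Sum.inr i => (u = y ∧ (i : ℕ) = 0) ∨ (u = x ∧ (i : ℕ) = d - 2)
    | Sum.inr i, Sum.inr j => (i : ℕ) + 1 = (j : ℕ)
    | Sum.inr _, Sum.inl _ => False


open SimpleGraph

section Generic
variable {α : Type*} {β : Type*}

/-- Restriction of a graph to a finset, as a graph on the same vertex type. -/
def selg (K : SimpleGraph α) (S : Finset α) : SimpleGraph α where
  Adj a b := a ∈ S ∧ b ∈ S ∧ K.Adj a b
  symm := ⟨fun _ _ ⟨ha, hb, h⟩ => ⟨hb, ha, h.symm⟩⟩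
  loopless := ⟨fun _ ⟨_, _, h⟩ => K.irrefl h⟩

@[simp] lemma selg_adj {K : SimpleGraph α} {S : Finset α} {a b : α} :
    (selg K S).Adj a b ↔ a ∈ S ∧ b ∈ S ∧ K.Adj a b := Iff.rfl

lemma selg_mono {K : SimpleGraph α} {S T : Finset α} (h : S ⊆ T) :
    selg K S ≤ selg K T := fun _ _ ⟨ha, hb, hadj⟩ => ⟨h ha, h hb, hadj⟩

lemma reach_map {K₁ : SimpleGraph α} {K₂ : SimpleGraph β} (f : α → β)
    (h : ∀ a b, K₁.Adj a b → K₂.Reachable (f a) (f b)) {u v : α}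
    (hr : K₁.Reachable u v) : K₂.Reachable (f u) (f v) := by
  obtain ⟨p⟩ := hr
  induction p with
  | nil => exact Reachable.refl _
  | cons ha _ ih => exact (h _ _ ha).trans ih

lemma reach_cut {K : SimpleGraph α} (C : Set α)
    (h : ∀ a b, K.Adj a b → (a ∈ C ↔ b ∈ C)) {u v : α}
    (hr : K.Reachable u v) : u ∈ C ↔ v ∈ C := by
  obtain ⟨p⟩ := hr
  induction p with
  | nil => exact Iff.rfl
  | cons ha _ ih => exact (h _ _ ha).trans ih

lemma reach_isolated {K : SimpleGraph α} {u v : α}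
    (h : ∀ b, ¬K.Adj u b) (hr : K.Reachable u v) : u = v := by
  obtain ⟨p⟩ := hr
  cases p with
  | nil => rfl
  | cons ha _ => exact absurd ha (h _)

lemma not_isAcyclic_iff {K : SimpleGraph α} :
    ¬K.IsAcyclic ↔ ∃ p q, K.Adj p q ∧
      (K \ SimpleGraph.fromEdgeSet {s(p, q)}).Reachable p q := by
  rw [isAcyclic_iff_forall_adj_isBridge]
  push_neg
  constructor
  · rintro ⟨p, q, hadj, hnb⟩
    refine ⟨p, q, hadj, ?_⟩
    rw [isBridge_iff] at hnb
    by_contra hre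
    exact hnb hre
  · rintro ⟨p, q, hadj, hr⟩
    exact ⟨p, q, hadj, fun hb => (isBridge_iff.mp hb) hr⟩

lemma isAcyclic_mono {K₁ K₂ : SimpleGraph α} (h : K₁ ≤ K₂) (h2 : K₂.IsAcyclic) :
    K₁.IsAcyclic := by
  by_contra hc
  obtain ⟨p, q, hadj, hr⟩ := not_isAcyclic_iff.mp hc
  refine not_isAcyclic_iff.mpr ⟨p, q, h hadj, ?_⟩ h2
  have hres := reach_map (K₂ := K₂ \ SimpleGraph.fromEdgeSet {s(p, q)}) id
    (fun a b hab => by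
      rw [sdiff_adj] at hab
      exact SimpleGraph.Adj.reachable (by rw [sdiff_adj]; exact ⟨h hab.1, hab.2⟩)) hr
  simpa using hres

lemma reach_sup_edge {A : SimpleGraph α} {x y : α} {u v : α}
    (hr : (A ⊔ SimpleGraph.fromEdgeSet {s(x, y)}).Reachable u v) :
    A.Reachable u v ∨ (A.Reachable u x ∧ A.Reachable y v) ∨
      (A.Reachable u y ∧ A.Reachable x v) := by
  obtain ⟨p⟩ := hr
  induction p with
  | nil => exact Or.inl (Reachable.refl _)
  | @cons a b c ha _ ih =>
    rw [sup_adj] at ha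
    rcases ha with ha | ha
    · rcases ih with h1 | ⟨h1, h2⟩ | ⟨h1, h2⟩
      · exact Or.inl (ha.reachable.trans h1)
      · exact Or.inr (Or.inl ⟨ha.reachable.trans h1, h2⟩)
      · exact Or.inr (Or.inr ⟨ha.reachable.trans h1, h2⟩)
    · rw [SimpleGraph.fromEdgeSet_adj, Set.mem_singleton_iff, Sym2.eq_iff] at ha
      rcases ha.1 with ⟨rfl, rfl⟩ | ⟨rfl, rfl⟩
      · rcases ih with h1 | ⟨h1, h2⟩ | ⟨h1, h2⟩
        · exact Or.inr (Or.inl ⟨Reachable.refl _, h1⟩)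
        · exact Or.inr (Or.inl ⟨Reachable.refl _, h2⟩)
        · exact Or.inl h2
      · rcases ih with h1 | ⟨h1, h2⟩ | ⟨h1, h2⟩
        · exact Or.inr (Or.inr ⟨Reachable.refl _, h1⟩)
        · exact Or.inl h2
        · exact Or.inr (Or.inr ⟨Reachable.refl _, h2⟩)

lemma reach_of_add_edge {A : SimpleGraph α} {x y : α} (hA : A.IsAcyclic) (hxy : x ≠ y)
    (h : ¬(A ⊔ SimpleGraph.fromEdgeSet {s(x, y)}).IsAcyclic) : A.Reachable x y := by
  obtain ⟨p, q, hadj, hr⟩ := not_isAcyclic_iff.mp h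
  rw [sup_adj] at hadj
  rcases hadj with hadj | hadj
  · have hle : (A ⊔ SimpleGraph.fromEdgeSet {s(x, y)}) \
        SimpleGraph.fromEdgeSet {s(p, q)} ≤
        (A \ SimpleGraph.fromEdgeSet {s(p, q)}) ⊔
          SimpleGraph.fromEdgeSet {s(x, y)} := by
      intro a b hab
      rw [sdiff_adj, sup_adj] at hab
      rcases hab with ⟨h1 | h1, h2⟩
      · exact Or.inl ⟨h1, h2⟩
      · exact Or.inr h1
    have hr' := reach_map id (fun a b hab => (hle hab).reachable) hr
    simp only [id] at hr'
    rcases reach_sup_edge hr' with h1 | ⟨h1, h2⟩ | ⟨h1, h2⟩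
    · exact absurd hA (not_isAcyclic_iff.mpr ⟨p, q, hadj, h1⟩)
    · have lift : ∀ {a b : α}, (A \ SimpleGraph.fromEdgeSet {s(p, q)}).Reachable a b →
          A.Reachable a b := fun h =>
        reach_map id (fun a b hab => ((sdiff_adj _ _ _ _).mp hab).1.reachable) h
      exact ((lift h1).symm.trans hadj.reachable).trans (lift h2).symm
    · have lift : ∀ {a b : α}, (A \ SimpleGraph.fromEdgeSet {s(p, q)}).Reachable a b →
          A.Reachable a b := fun h =>
        reach_map id (fun a b hab => ((sdiff_adj _ _ _ _).mp hab).1.reachable) h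
      exact (lift h2).trans (hadj.symm.reachable.trans (lift h1))
  · rw [SimpleGraph.fromEdgeSet_adj, Set.mem_singleton_iff] at hadj
    have hle : (A ⊔ SimpleGraph.fromEdgeSet {s(x, y)}) \
        SimpleGraph.fromEdgeSet {s(p, q)} ≤ A := by
      intro a b hab
      rw [sdiff_adj, sup_adj] at hab
      rcases hab with ⟨h1 | h1, h2⟩
      · exact h1
      · exfalso
        apply h2
        rw [SimpleGraph.fromEdgeSet_adj] at h1 ⊢
        rw [Set.mem_singleton_iff] at h1 ⊢
        exact ⟨by rw [h1.1, ← hadj.1], h1.2⟩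
    have hr' := reach_map id (fun a b hab => (hle hab).reachable) hr
    simp only [id] at hr'
    rcases Sym2.eq_iff.mp hadj.1 with ⟨rfl, rfl⟩ | ⟨rfl, rfl⟩
    · exact hr'
    · exact hr'.symm

lemma acyclic_add_pendant {A : SimpleGraph α} (hA : A.IsAcyclic) {y z : α} (hyz : y ≠ z)
    (hiso : ∀ b, ¬A.Adj y b) :
    (A ⊔ SimpleGraph.fromEdgeSet {s(y, z)}).IsAcyclic := by
  by_contra h
  exact hyz (reach_isolated hiso (reach_of_add_edge hA hyz h))

end Generic
section ForestSel
variable {V : Type*} {G : SimpleGraph V} {X Y : Finset V}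

lemma sym2_subtype_ne {s : Set V} {a b p q : s}
    (h : s((a : V), (b : V)) = s((p : V), (q : V))) : s(a, b) = s(p, q) := by
  rw [Sym2.eq_iff] at h ⊢
  rcases h with ⟨h1, h2⟩ | ⟨h1, h2⟩
  · exact Or.inl ⟨Subtype.ext h1, Subtype.ext h2⟩
  · exact Or.inr ⟨Subtype.ext h1, Subtype.ext h2⟩

lemma forest_iff_sel : IsInducedForest G X ↔ (selg G X).IsAcyclic := by
  unfold IsInducedForest
  rw [← not_iff_not, not_isAcyclic_iff, not_isAcyclic_iff]
  constructor
  · rintro ⟨p, q, hadj, hr⟩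
    rw [SimpleGraph.comap_adj] at hadj
    refine ⟨p, q, ⟨by simpa using p.2, by simpa using q.2, hadj⟩, ?_⟩
    have := reach_map (K₂ := selg G X \ SimpleGraph.fromEdgeSet {s((p : V), (q : V))})
      (Subtype.val) (fun a b hab => ?_) hr
    · exact this
    rw [sdiff_adj] at hab
    refine SimpleGraph.Adj.reachable ?_
    rw [sdiff_adj, SimpleGraph.fromEdgeSet_adj]
    rw [SimpleGraph.comap_adj] at hab
    refine ⟨⟨by simpa using a.2, by simpa using b.2, hab.1⟩, ?_⟩
    rintro ⟨hmem, -⟩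
    rw [Set.mem_singleton_iff] at hmem
    exact hab.2 (by
      rw [SimpleGraph.fromEdgeSet_adj]
      exact ⟨Set.mem_singleton_iff.mpr (sym2_subtype_ne hmem), fun hab' => (hab.1).ne (congrArg Subtype.val hab')⟩)
  · rintro ⟨p, q, ⟨hp, hq, hadj⟩, hr⟩
    classical
    have hp' : p ∈ (X : Set V) := by simpa using hp
    have hq' : q ∈ (X : Set V) := by simpa using hq
    set f : V → (X : Set V) := fun v => if h : v ∈ X then ⟨v, by simpa using h⟩ else ⟨p, hp'⟩ with hf
    refine ⟨⟨p, hp'⟩, ⟨q, hq'⟩, by rw [SimpleGraph.comap_adj]; exact hadj, ?_⟩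
    have := reach_map (K₂ := (G.induce (X : Set V)) \
        SimpleGraph.fromEdgeSet {s((⟨p, hp'⟩ : (X : Set V)), ⟨q, hq'⟩)}) f
      (fun a b hab => ?_) hr
    · have e1 : f p = ⟨p, hp'⟩ := by simp [hf, hp]
      have e2 : f q = ⟨q, hq'⟩ := by simp [hf, hq]
      rwa [e1, e2] at this
    rw [sdiff_adj] at hab
    obtain ⟨⟨haX, hbX, hGab⟩, hne⟩ := hab
    have haX' : a ∈ (X : Set V) := by simpa using haX
    have hbX' : b ∈ (X : Set V) := by simpa using hbX
    refine SimpleGraph.Adj.reachable ?_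
    rw [sdiff_adj, SimpleGraph.fromEdgeSet_adj]
    have e1 : f a = ⟨a, haX'⟩ := by simp [hf, haX]
    have e2 : f b = ⟨b, hbX'⟩ := by simp [hf, hbX]
    rw [e1, e2]
    refine ⟨by rw [SimpleGraph.comap_adj]; exact hGab, ?_⟩
    rintro ⟨hmem, -⟩
    rw [Set.mem_singleton_iff] at hmem
    refine hne ?_
    rw [SimpleGraph.fromEdgeSet_adj]
    have : s(a, b) = s(p, q) := by
      rw [Sym2.eq_iff] at hmem ⊢
      rcases hmem with ⟨h1, h2⟩ | ⟨h1, h2⟩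
      · exact Or.inl ⟨congrArg Subtype.val h1, congrArg Subtype.val h2⟩
      · exact Or.inr ⟨congrArg Subtype.val h1, congrArg Subtype.val h2⟩
    exact ⟨Set.mem_singleton_iff.mpr this, hGab.ne⟩

lemma forest_mono (h : X ⊆ Y) (hY : IsInducedForest G Y) : IsInducedForest G X :=
  forest_iff_sel.mpr (isAcyclic_mono (selg_mono h) (forest_iff_sel.mp hY))

lemma forest_empty : IsInducedForest G (∅ : Finset V) := by
  rw [forest_iff_sel]
  have : selg G (∅ : Finset V) = ⊥ := by
    ext a b
    simp [selg_adj]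
  rw [this]
  exact SimpleGraph.isAcyclic_bot

lemma maximal_iff_insert [DecidableEq V] : IsMaximalInducedForest G X ↔
    IsInducedForest G X ∧ ∀ u ∉ X, ¬IsInducedForest G (insert u X) := by
  constructor
  · exact fun h => ⟨h.1, fun u hu hf => h.2 _ (Finset.ssubset_insert hu) hf⟩
  · rintro ⟨h1, h2⟩
    refine ⟨h1, fun Y hY hf => ?_⟩
    obtain ⟨u, huY, huX⟩ := Finset.exists_of_ssubset hY
    exact h2 u huX (forest_mono (Finset.insert_subset huY hY.subset) hf)

lemma exists_maximal_forest [Fintype V] [DecidableEq V] (h : IsInducedForest G X) :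
    ∃ Y, X ⊆ Y ∧ IsMaximalInducedForest G Y ∧ X.card ≤ Y.card := by
  classical
  set F : Finset (Finset V) :=
    Finset.univ.filter (fun Y => X ⊆ Y ∧ IsInducedForest G Y) with hF
  have hne : F.Nonempty := ⟨X, by simp [hF, h]⟩
  obtain ⟨Y, hYF, hYmax⟩ := Finset.exists_max_image F Finset.card hne
  rw [hF, Finset.mem_filter] at hYF
  refine ⟨Y, hYF.2.1, maximal_iff_insert.mpr ⟨hYF.2.2, fun u hu hf => ?_⟩,
    Finset.card_le_card hYF.2.1⟩
  have : insert u Y ∈ F := by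
    rw [hF, Finset.mem_filter]
    exact ⟨Finset.mem_univ _, hYF.2.1.trans (Finset.subset_insert _ _), hf⟩
  have := hYmax _ this
  rw [Finset.card_insert_of_notMem hu] at this
  omega

lemma le_forestNum [Fintype V] (h : IsInducedForest G X) : X.card ≤ forestNum G := by
  refine le_csSup ⟨Fintype.card V, ?_⟩ ⟨X, h, rfl⟩
  rintro n ⟨Y, -, rfl⟩
  simpa using Finset.card_le_univ Y

lemma exists_forestNum [Fintype V] (G : SimpleGraph V) :
    ∃ X : Finset V, IsInducedForest G X ∧ X.card = forestNum G := by
  have h1 : ({n | ∃ X : Finset V, IsInducedForest G X ∧ X.card = n}).Nonempty :=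
    ⟨0, ∅, forest_empty, Finset.card_empty⟩
  have h2 : BddAbove {n | ∃ X : Finset V, IsInducedForest G X ∧ X.card = n} := by
    refine ⟨Fintype.card V, ?_⟩
    rintro n ⟨Y, -, rfl⟩
    simpa using Finset.card_le_univ Y
  exact Nat.sSup_mem h1 h2

end ForestSel
section Subdiv
open Sum
variable {V : Type*} {G : SimpleGraph V} {x y : V} {d : ℕ}

lemma sdg_adj_ll {u v : V} : (subdividedGraph G x y d).Adj (inl u) (inl v) ↔
    (G.Adj u v ∧ s(u, v) ≠ s(x, y)) := by
  unfold subdividedGraph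
  rw [SimpleGraph.fromRel_adj]
  constructor
  · rintro ⟨hne, h | h⟩
    · refine ⟨h.1, fun hs => h.2 ?_⟩
      rw [Sym2.eq_iff] at hs; tauto
    · refine ⟨h.1.symm, fun hs => h.2 ?_⟩
      rw [Sym2.eq_iff] at hs; tauto
  · rintro ⟨hadj, hne⟩
    refine ⟨by simp [hadj.ne], Or.inl ⟨hadj, fun hp => hne ?_⟩⟩
    rw [Sym2.eq_iff]; tauto

lemma sdg_adj_lr {u : V} {i : Fin (d - 1)} :
    (subdividedGraph G x y d).Adj (inl u) (inr i) ↔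
      ((u = y ∧ (i : ℕ) = 0) ∨ (u = x ∧ (i : ℕ) = d - 2)) := by
  unfold subdividedGraph
  rw [SimpleGraph.fromRel_adj]
  simp

lemma sdg_adj_rl {u : V} {i : Fin (d - 1)} :
    (subdividedGraph G x y d).Adj (inr i) (inl u) ↔
      ((u = y ∧ (i : ℕ) = 0) ∨ (u = x ∧ (i : ℕ) = d - 2)) := by
  rw [SimpleGraph.adj_comm]; exact sdg_adj_lr

lemma sdg_adj_rr {i j : Fin (d - 1)} :
    (subdividedGraph G x y d).Adj (inr i) (inr j) ↔
      ((i : ℕ) + 1 = j ∨ (j : ℕ) + 1 = i) := by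
  unfold subdividedGraph
  rw [SimpleGraph.fromRel_adj]
  constructor
  · rintro ⟨-, h⟩; exact h
  · intro h
    refine ⟨?_, h⟩
    rintro heq
    rw [Sum.inr.injEq] at heq
    subst heq
    omega

/-- no ll edge equals an lr or rr edge, etc. -/
lemma sym2_ll_ll {a b p q : V} :
    s((inl a : V ⊕ Fin (d-1)), inl b) = s(inl p, inl q) ↔ s(a, b) = s(p, q) := by
  rw [Sym2.eq_iff, Sym2.eq_iff]; simp

lemma sym2_ll_lr {a b p : V} {i : Fin (d-1)} :
    s((inl a : V ⊕ Fin (d-1)), inl b) ≠ s(inl p, inr i) := by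
  simp only [ne_eq, Sym2.eq_iff]; simp

lemma sym2_ll_rr {a b : V} {i j : Fin (d-1)} :
    s((inl a : V ⊕ Fin (d-1)), inl b) ≠ s(inr i, inr j) := by
  simp only [ne_eq, Sym2.eq_iff]; simp

lemma sym2_lr_rr {a : V} {k i j : Fin (d-1)} :
    s((inl a : V ⊕ Fin (d-1)), inr k) ≠ s(inr i, inr j) := by
  simp only [ne_eq, Sym2.eq_iff]; simp

lemma sym2_lr_lr {a b : V} {i j : Fin (d-1)} :
    s((inl a : V ⊕ Fin (d-1)), inr i) = s(inl b, inr j) ↔ a = b ∧ i = j := by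
  rw [Sym2.eq_iff]; simp

/-- reaching along the interior path -/
lemma chain_reach {K : SimpleGraph (V ⊕ Fin (d - 1))}
    (hcons : ∀ (m : ℕ) (h1 : m + 1 < d - 1),
      K.Adj (inr ⟨m, by omega⟩) (inr ⟨m + 1, h1⟩)) :
    ∀ (b a : ℕ) (hab : a ≤ b) (hb : b < d - 1),
      K.Reachable (inr ⟨a, by omega⟩) (inr ⟨b, hb⟩) := by
  intro b
  induction b with
  | zero =>
    intro a hab hb
    have : a = 0 := by omega
    subst this
    exact Reachable.refl _
  | succ n ih =>
    intro a hab hb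
    rcases Nat.lt_or_ge a (n + 1) with h | h
    · have ha : a ≤ n := by omega
      exact (ih a ha (by omega)).trans (hcons n hb).reachable
    · have : a = n + 1 := by omega
      subst this
      exact Reachable.refl _

end Subdiv
section Master
open Sum Finset
variable {V : Type*} [DecidableEq V] {G : SimpleGraph V} {x y : V} {d : ℕ}

lemma selg_del_adj {α : Type*} {K : SimpleGraph α} {X : Finset α} {u v : α} {E : Sym2 α}
    (hu : u ∈ X) (hv : v ∈ X) (h : K.Adj u v) (hne : s(u, v) ≠ E) :
    (selg K X \ SimpleGraph.fromEdgeSet {E}).Adj u v := by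
  rw [sdiff_adj, SimpleGraph.fromEdgeSet_adj]
  exact ⟨⟨hu, hv, h⟩, fun hc => hne (Set.mem_singleton_iff.mp hc.1)⟩

lemma del_adj_decomp {α : Type*} {K : SimpleGraph α} {E : Sym2 α} {a b : α}
    (h : (K \ SimpleGraph.fromEdgeSet {E}).Adj a b) : K.Adj a b ∧ s(a, b) ≠ E := by
  rw [sdiff_adj, SimpleGraph.fromEdgeSet_adj] at h
  exact ⟨h.1, fun hc => h.2 ⟨Set.mem_singleton_iff.mpr hc, h.1.ne⟩⟩

lemma keylemA (hxy : G.Adj x y) {X : Finset V} (hX : (selg G X).IsAcyclic)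
    (hr : (selg G X \ SimpleGraph.fromEdgeSet {s(x, y)}).Reachable x y) : False := by
  by_cases hx : x ∈ X
  · by_cases hy : y ∈ X
    · refine not_isAcyclic_iff.mpr ⟨x, y, ?_, hr⟩ hX
      exact ⟨hx, hy, hxy⟩
    · have : y = x := reach_isolated (fun b hb => by
        rw [sdiff_adj] at hb; exact hy hb.1.1) hr.symm
      exact hxy.ne this.symm
  · have : x = y := reach_isolated (fun b hb => by
      rw [sdiff_adj] at hb; exact hx hb.1.1) hr
    exact hxy.ne this

/-- Transfer along a collapse map `Sum.elim id g` where every non-`ll` edge collapses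
suitably. This is the ll-witness core for master A. -/
lemma llcoreA (hxy : G.Adj x y) {X : Finset V} (hX : (selg G X).IsAcyclic)
    {P : Finset (Fin (d - 1))} {p q : V} (hpq : G.Adj p q) (hne : s(p, q) ≠ s(x, y))
    (hp : p ∈ X) (hq : q ∈ X)
    (hr : (selg (subdividedGraph G x y d) (X.disjSum P) \
      SimpleGraph.fromEdgeSet {s(inl p, inl q)}).Reachable (inl p) (inl q)) : False := by
  classical
  set c : V := if y ∈ X then y else x with hc
  set f : V ⊕ Fin (d - 1) → V := Sum.elim id (fun _ => c) with hf
  have key : ∀ a b, (selg (subdividedGraph G x y d) (X.disjSum P) \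
      SimpleGraph.fromEdgeSet {s(inl p, inl q)}).Adj a b →
      (selg G X \ SimpleGraph.fromEdgeSet {s(p, q)}).Reachable (f a) (f b) := by
    rintro (u | i) (v | j) hadj <;> obtain ⟨hH, hnd⟩ := del_adj_decomp hadj
    · -- ll
      rw [selg_adj] at hH
      obtain ⟨hu, hv, hH⟩ := hH
      rw [sdg_adj_ll] at hH
      exact (selg_del_adj (Finset.inl_mem_disjSum.mp hu) (Finset.inl_mem_disjSum.mp hv)
        hH.1 (fun hc' => hnd (by rw [sym2_ll_ll]; exact hc'))).reachable
    · -- lr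
      rw [selg_adj] at hH
      obtain ⟨hu, hv, hH⟩ := hH
      rw [sdg_adj_lr] at hH
      rcases hH with ⟨heq, hj⟩ | ⟨heq, hj⟩
      · have hyX : y ∈ X := heq ▸ Finset.inl_mem_disjSum.mp hu
        have h2 : f (inr j) = y := by simp [hf, hc, hyX]
        rw [show f (inl u) = u from rfl, h2, heq]
      · by_cases hyX : y ∈ X
        · have h2 : f (inr j) = y := by simp [hf, hc, hyX]
          rw [show f (inl u) = u from rfl, h2, heq]
          exact (selg_del_adj (heq ▸ Finset.inl_mem_disjSum.mp hu) hyX hxy (Ne.symm hne)).reachable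
        · have h2 : f (inr j) = x := by simp [hf, hc, hyX]
          rw [show f (inl u) = u from rfl, h2, heq]
    · -- rl
      rw [selg_adj] at hH
      obtain ⟨hu, hv, hH⟩ := hH
      rw [sdg_adj_rl] at hH
      rcases hH with ⟨heq, hj⟩ | ⟨heq, hj⟩
      · have hyX : y ∈ X := heq ▸ Finset.inl_mem_disjSum.mp hv
        have h2 : f (inr i) = y := by simp [hf, hc, hyX]
        rw [show f (inl v) = v from rfl, h2, heq]
      · by_cases hyX : y ∈ X
        · have h2 : f (inr i) = y := by simp [hf, hc, hyX]
          rw [show f (inl v) = v from rfl, h2, heq]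
          exact ((selg_del_adj (heq ▸ Finset.inl_mem_disjSum.mp hv) hyX hxy (Ne.symm hne)).reachable).symm
        · have h2 : f (inr i) = x := by simp [hf, hc, hyX]
          rw [show f (inl v) = v from rfl, h2, heq]
    · -- rr
      exact Reachable.refl _
  have hr' := reach_map f key hr
  have e1 : f (inl p) = p := rfl
  have e2 : f (inl q) = q := rfl
  rw [e1, e2] at hr'
  refine not_isAcyclic_iff.mpr ⟨p, q, ?_, hr'⟩ hX
  exact ⟨hp, hq, hpq⟩

end Master
section MasterA2
open Sum Finset
variable {V : Type*} [DecidableEq V] {G : SimpleGraph V} {x y : V} {d : ℕ}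

lemma lrcoreA (hxy : G.Adj x y) {X : Finset V} (hX : (selg G X).IsAcyclic)
    {P : Finset (Fin (d - 1))} {j : Fin (d - 1)} (hj : (j : ℕ) = 0)
    (hr : (selg (subdividedGraph G x y d) (X.disjSum P) \
      SimpleGraph.fromEdgeSet {s(inl y, inr j)}).Reachable (inl y) (inr j)) : False := by
  classical
  set f : V ⊕ Fin (d - 1) → V := Sum.elim id (fun _ => x) with hf
  have key : ∀ a b, (selg (subdividedGraph G x y d) (X.disjSum P) \
      SimpleGraph.fromEdgeSet {s(inl y, inr j)}).Adj a b →
      (selg G X \ SimpleGraph.fromEdgeSet {s(x, y)}).Reachable (f a) (f b) := by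
    rintro (u | i') (v | j') hadj <;> obtain ⟨hH, hnd⟩ := del_adj_decomp hadj
    · obtain ⟨hu, hv, hH⟩ := hH
      rw [sdg_adj_ll] at hH
      exact (selg_del_adj (Finset.inl_mem_disjSum.mp hu) (Finset.inl_mem_disjSum.mp hv)
        hH.1 hH.2).reachable
    · obtain ⟨hu, hv, hH⟩ := hH
      rw [sdg_adj_lr] at hH
      rcases hH with ⟨heq, hj'⟩ | ⟨heq, hj'⟩
      · exact absurd (by rw [heq, show j' = j from Fin.ext (by omega)]) hnd
      · rw [show f (inl u) = u from rfl, show f (inr j') = x from rfl, heq]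
    · obtain ⟨hu, hv, hH⟩ := hH
      rw [sdg_adj_rl] at hH
      rcases hH with ⟨heq, hi'⟩ | ⟨heq, hi'⟩
      · refine absurd ?_ hnd
        rw [heq, show i' = j from Fin.ext (by omega)]
        exact Sym2.eq_swap
      · rw [show f (inl v) = v from rfl, show f (inr i') = x from rfl, heq]
    · exact Reachable.refl _
  have hr' := reach_map f key hr
  exact keylemA hxy hX hr'.symm

lemma lrcoreA' (hxy : G.Adj x y) {X : Finset V} (hX : (selg G X).IsAcyclic)
    {P : Finset (Fin (d - 1))} {j : Fin (d - 1)} (hj : (j : ℕ) = d - 2)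
    (hr : (selg (subdividedGraph G x y d) (X.disjSum P) \
      SimpleGraph.fromEdgeSet {s(inl x, inr j)}).Reachable (inl x) (inr j)) : False := by
  classical
  set f : V ⊕ Fin (d - 1) → V := Sum.elim id (fun _ => y) with hf
  have key : ∀ a b, (selg (subdividedGraph G x y d) (X.disjSum P) \
      SimpleGraph.fromEdgeSet {s(inl x, inr j)}).Adj a b →
      (selg G X \ SimpleGraph.fromEdgeSet {s(x, y)}).Reachable (f a) (f b) := by
    rintro (u | i') (v | j') hadj <;> obtain ⟨hH, hnd⟩ := del_adj_decomp hadj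
    · obtain ⟨hu, hv, hH⟩ := hH
      rw [sdg_adj_ll] at hH
      exact (selg_del_adj (Finset.inl_mem_disjSum.mp hu) (Finset.inl_mem_disjSum.mp hv)
        hH.1 hH.2).reachable
    · obtain ⟨hu, hv, hH⟩ := hH
      rw [sdg_adj_lr] at hH
      rcases hH with ⟨heq, hj'⟩ | ⟨heq, hj'⟩
      · rw [show f (inl u) = u from rfl, show f (inr j') = y from rfl, heq]
      · exact absurd (by rw [heq, show j' = j from Fin.ext (by omega)]) hnd
    · obtain ⟨hu, hv, hH⟩ := hH
      rw [sdg_adj_rl] at hH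
      rcases hH with ⟨heq, hi'⟩ | ⟨heq, hi'⟩
      · rw [show f (inl v) = v from rfl, show f (inr i') = y from rfl, heq]
      · refine absurd ?_ hnd
        rw [heq, show i' = j from Fin.ext (by omega)]
        exact Sym2.eq_swap
    · exact Reachable.refl _
  have hr' := reach_map f key hr
  exact keylemA hxy hX hr'

lemma rrcoreA (hxy : G.Adj x y) {X : Finset V} (hX : (selg G X).IsAcyclic)
    {P : Finset (Fin (d - 1))} {i j : Fin (d - 1)} (hij : (i : ℕ) + 1 = j)
    (hr : (selg (subdividedGraph G x y d) (X.disjSum P) \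
      SimpleGraph.fromEdgeSet {s(inr i, inr j)}).Reachable (inr i) (inr j)) : False := by
  classical
  set f : V ⊕ Fin (d - 1) → V := Sum.elim id (fun m => if (m : ℕ) ≤ i then y else x) with hf
  have key : ∀ a b, (selg (subdividedGraph G x y d) (X.disjSum P) \
      SimpleGraph.fromEdgeSet {s(inr i, inr j)}).Adj a b →
      (selg G X \ SimpleGraph.fromEdgeSet {s(x, y)}).Reachable (f a) (f b) := by
    have hjlt : (j : ℕ) < d - 1 := j.isLt
    rintro (u | m) (v | m') hadj <;> obtain ⟨hH, hnd⟩ := del_adj_decomp hadj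
    · obtain ⟨hu, hv, hH⟩ := hH
      rw [sdg_adj_ll] at hH
      exact (selg_del_adj (Finset.inl_mem_disjSum.mp hu) (Finset.inl_mem_disjSum.mp hv)
        hH.1 hH.2).reachable
    · obtain ⟨hu, hv, hH⟩ := hH
      rw [sdg_adj_lr] at hH
      rcases hH with ⟨heq, hj'⟩ | ⟨heq, hj'⟩
      · rw [show f (inl u) = u from rfl, show f (inr m') = y from if_pos (by omega), heq]
      · rw [show f (inl u) = u from rfl, show f (inr m') = x from if_neg (by omega), heq]
    · obtain ⟨hu, hv, hH⟩ := hH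
      rw [sdg_adj_rl] at hH
      rcases hH with ⟨heq, hi'⟩ | ⟨heq, hi'⟩
      · rw [show f (inl v) = v from rfl, show f (inr m) = y from if_pos (by omega), heq]
      · rw [show f (inl v) = v from rfl, show f (inr m) = x from if_neg (by omega), heq]
    · obtain ⟨hu, hv, hH⟩ := hH
      rw [sdg_adj_rr] at hH
      by_cases hm : (m : ℕ) ≤ i <;> by_cases hm' : (m' : ℕ) ≤ i
      · rw [show f (inr m) = y from if_pos hm, show f (inr m') = y from if_pos hm']
      · refine absurd ?_ hnd
        rw [show m = i from Fin.ext (by omega), show m' = j from Fin.ext (by omega)]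
      · refine absurd ?_ hnd
        rw [show m' = i from Fin.ext (by omega), show m = j from Fin.ext (by omega)]
        exact Sym2.eq_swap
      · rw [show f (inr m) = x from if_neg hm, show f (inr m') = x from if_neg hm']
  have hr' := reach_map f key hr
  rw [show f (inr i) = y from if_pos le_rfl, show f (inr j) = x from if_neg (by omega)] at hr'
  exact keylemA hxy hX hr'.symm

lemma masterA (hxy : G.Adj x y) {X : Finset V} (hX : (selg G X).IsAcyclic)
    {P : Finset (Fin (d - 1))} :
    (selg (subdividedGraph G x y d) (X.disjSum P)).IsAcyclic := by
  by_contra hcon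
  obtain ⟨a, b, hab, hr⟩ := not_isAcyclic_iff.mp hcon
  obtain ⟨haS, hbS, hH⟩ := hab
  rcases a with u | i <;> rcases b with v | j
  · rw [sdg_adj_ll] at hH
    exact llcoreA hxy hX hH.1 hH.2 (Finset.inl_mem_disjSum.mp haS)
      (Finset.inl_mem_disjSum.mp hbS) hr
  · rw [sdg_adj_lr] at hH
    rcases hH with ⟨heq, hj⟩ | ⟨heq, hj⟩
    · subst heq; exact lrcoreA hxy hX hj hr
    · subst heq; exact lrcoreA' hxy hX hj hr
  · rw [sdg_adj_rl] at hH
    rcases hH with ⟨heq, hi⟩ | ⟨heq, hi⟩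
    · subst heq
      rw [show s((inr i : V ⊕ Fin (d-1)), inl v) = s(inl v, inr i) from Sym2.eq_swap] at hr
      exact lrcoreA hxy hX hi hr.symm
    · subst heq
      rw [show s((inr i : V ⊕ Fin (d-1)), inl v) = s(inl v, inr i) from Sym2.eq_swap] at hr
      exact lrcoreA' hxy hX hi hr.symm
  · rw [sdg_adj_rr] at hH
    rcases hH with hij | hij
    · exact rrcoreA hxy hX hij hr
    · rw [show s((inr i : V ⊕ Fin (d-1)), inr j) = s(inr j, inr i) from Sym2.eq_swap] at hr
      exact rrcoreA hxy hX hij hr.symm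

end MasterA2
section MasterB
open Sum Finset
variable {V : Type*} [DecidableEq V] {G : SimpleGraph V} {x y z : V} {d : ℕ}

lemma selg_del2_adj {α : Type*} {K : SimpleGraph α} {X : Finset α} {u v : α} {E1 E2 : Sym2 α}
    (hu : u ∈ X) (hv : v ∈ X) (h : K.Adj u v) (h1 : s(u, v) ≠ E1) (h2 : s(u, v) ≠ E2) :
    ((selg K X \ SimpleGraph.fromEdgeSet {E1}) \ SimpleGraph.fromEdgeSet {E2}).Adj u v := by
  rw [sdiff_adj, SimpleGraph.fromEdgeSet_adj]
  exact ⟨selg_del_adj hu hv h h1, fun hc => h2 (Set.mem_singleton_iff.mp hc.1)⟩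

lemma keylemB (hxy : G.Adj x y) (hGyz : G.Adj y z)
    (hnbr : ∀ b, G.Adj y b → b = x ∨ b = z) {T : Finset V}
    (hT : (selg G (T.erase y)).IsAcyclic) {p q : V} (hpq : G.Adj p q)
    (hnexy : s(p, q) ≠ s(x, y)) (hp : p ∈ T) (hq : q ∈ T)
    (hr : ((selg G T \ SimpleGraph.fromEdgeSet {s(x, y)}) \
      SimpleGraph.fromEdgeSet {s(p, q)}).Reachable p q) : False := by
  have hnot : ¬(selg G T \ SimpleGraph.fromEdgeSet {s(x, y)}).IsAcyclic :=
    not_isAcyclic_iff.mpr ⟨p, q, selg_del_adj hp hq hpq hnexy, hr⟩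
  apply hnot
  have hle : selg G T \ SimpleGraph.fromEdgeSet {s(x, y)} ≤
      selg G (T.erase y) ⊔ SimpleGraph.fromEdgeSet {s(y, z)} := by
    intro a b hab
    obtain ⟨⟨haT, hbT, hG⟩, hne⟩ := del_adj_decomp hab
    by_cases hay : a = y
    · subst hay
      rcases hnbr b hG with rfl | rfl
      · exact absurd Sym2.eq_swap hne
      · refine Or.inr ?_
        rw [SimpleGraph.fromEdgeSet_adj]
        exact ⟨Set.mem_singleton_iff.mpr rfl, hG.ne⟩
    · by_cases hby : b = y
      · subst hby
        rcases hnbr a hG.symm with rfl | rfl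
        · exact absurd rfl hne
        · refine Or.inr ?_
          rw [SimpleGraph.fromEdgeSet_adj]
          exact ⟨Set.mem_singleton_iff.mpr Sym2.eq_swap, hG.ne⟩
      · exact Or.inl ⟨Finset.mem_erase.mpr ⟨hay, haT⟩, Finset.mem_erase.mpr ⟨hby, hbT⟩, hG⟩
  exact isAcyclic_mono hle
    (acyclic_add_pendant hT hGyz.ne
      (fun b hb => (Finset.mem_erase.mp hb.1).1 rfl))

lemma masterB (hxy : G.Adj x y) (hGyz : G.Adj y z)
    (hnbr : ∀ b, G.Adj y b → b = x ∨ b = z) {T : Finset V} {i : Fin (d - 1)}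
    (hT : (selg G (T.erase y)).IsAcyclic) :
    (selg (subdividedGraph G x y d) (T.disjSum (Finset.univ.erase i))).IsAcyclic := by
  classical
  by_contra hcon
  obtain ⟨a, b, hab, hr⟩ := not_isAcyclic_iff.mp hcon
  obtain ⟨haS, hbS, hH⟩ := hab
  have hilt : (i : ℕ) < d - 1 := i.isLt
  -- helper to extract "≠ i" facts on the natural level
  have hvne : ∀ {m : Fin (d - 1)},
      inr m ∈ T.disjSum (Finset.univ.erase i) → (m : ℕ) ≠ (i : ℕ) := by
    intro m hm
    have := (Finset.mem_erase.mp (Finset.inr_mem_disjSum.mp hm)).1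
    exact fun h => this (Fin.ext h)
  rcases a with u | m0 <;> rcases b with v | m0'
  · -- ll witness : collapse map split at i
    rw [sdg_adj_ll] at hH
    set f : V ⊕ Fin (d - 1) → V :=
      Sum.elim id (fun m => if (m : ℕ) < i then y else x) with hf
    have key : ∀ a b, (selg (subdividedGraph G x y d) (T.disjSum (Finset.univ.erase i)) \
        SimpleGraph.fromEdgeSet {s(inl u, inl v)}).Adj a b →
        ((selg G T \ SimpleGraph.fromEdgeSet {s(x, y)}) \
          SimpleGraph.fromEdgeSet {s(u, v)}).Reachable (f a) (f b) := by
      rintro (a' | m) (b' | m') hadj <;> obtain ⟨⟨hma, hmb, hAdj⟩, hnd⟩ := del_adj_decomp hadj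
      · rw [sdg_adj_ll] at hAdj
        exact (selg_del2_adj (Finset.inl_mem_disjSum.mp hma) (Finset.inl_mem_disjSum.mp hmb)
          hAdj.1 hAdj.2 (fun hc => hnd (by rw [sym2_ll_ll]; exact hc))).reachable
      · rw [sdg_adj_lr] at hAdj
        have hm'ne := hvne hmb
        rcases hAdj with ⟨heq, hj'⟩ | ⟨heq, hj'⟩
        · rw [show f (inl a') = a' from rfl, show f (inr m') = y from if_pos (by omega), heq]
        · rw [show f (inl a') = a' from rfl, show f (inr m') = x from if_neg (by omega), heq]
      · rw [sdg_adj_rl] at hAdj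
        have hmne := hvne hma
        rcases hAdj with ⟨heq, hj'⟩ | ⟨heq, hj'⟩
        · rw [show f (inl b') = b' from rfl, show f (inr m) = y from if_pos (by omega), heq]
        · rw [show f (inl b') = b' from rfl, show f (inr m) = x from if_neg (by omega), heq]
      · rw [sdg_adj_rr] at hAdj
        have hmne := hvne hma
        have hm'ne := hvne hmb
        have hside : ((m : ℕ) < i ↔ (m' : ℕ) < i) := by omega
        by_cases hs : (m : ℕ) < i
        · rw [show f (inr m) = y from if_pos hs, show f (inr m') = y from if_pos (hside.mp hs)]
        · rw [show f (inr m) = x from if_neg hs,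
            show f (inr m') = x from if_neg (fun hc => hs (hside.mpr hc))]
    have hr' := reach_map f key hr
    exact keylemB hxy hGyz hnbr hT hH.1 hH.2 (Finset.inl_mem_disjSum.mp haS)
      (Finset.inl_mem_disjSum.mp hbS) hr'
  · -- lr witness : cut argument
    rw [sdg_adj_lr] at hH
    have hjne := hvne hbS
    rcases hH with ⟨heq, hj⟩ | ⟨heq, hj⟩
    ·
      set C : Set (V ⊕ Fin (d - 1)) :=
        fun w => Sum.elim (fun _ => False) (fun (n : Fin (d-1)) => (n : ℕ) < (i : ℕ)) w with hC
      have key : ∀ a b, (selg (subdividedGraph G x y d) (T.disjSum (Finset.univ.erase i)) \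
          SimpleGraph.fromEdgeSet {s(inl u, inr m0')}).Adj a b → (a ∈ C ↔ b ∈ C) := by
        rintro (a' | m) (b' | m') hadj <;> obtain ⟨⟨hma, hmb, hAdj⟩, hnd⟩ := del_adj_decomp hadj
        · exact Iff.rfl
        · rw [sdg_adj_lr] at hAdj
          have hm'ne := hvne hmb
          rcases hAdj with ⟨heq2, hj'⟩ | ⟨heq2, hj'⟩
          · exact absurd (by rw [heq2, ← heq, show m' = m0' from Fin.ext (by omega)]) hnd
          · show False ↔ (m' : ℕ) < i
            simp only [false_iff]
            omega
        · rw [sdg_adj_rl] at hAdj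
          have hmne := hvne hma
          rcases hAdj with ⟨heq2, hj'⟩ | ⟨heq2, hj'⟩
          · refine absurd ?_ hnd
            rw [heq2, ← heq, show m = m0' from Fin.ext (by omega)]
            exact Sym2.eq_swap
          · show (m : ℕ) < i ↔ False
            simp only [iff_false]
            omega
        · rw [sdg_adj_rr] at hAdj
          have hmne := hvne hma
          have hm'ne := hvne hmb
          show (m : ℕ) < i ↔ (m' : ℕ) < i
          omega
      have := reach_cut C key hr
      simp only [hC, Membership.mem, Set.Mem, Sum.elim_inl, Sum.elim_inr] at this
      exact this.mpr (by omega)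
    ·
      set C : Set (V ⊕ Fin (d - 1)) :=
        fun w => Sum.elim (fun _ => False) (fun (n : Fin (d-1)) => (i : ℕ) < (n : ℕ)) w with hC
      have key : ∀ a b, (selg (subdividedGraph G x y d) (T.disjSum (Finset.univ.erase i)) \
          SimpleGraph.fromEdgeSet {s(inl u, inr m0')}).Adj a b → (a ∈ C ↔ b ∈ C) := by
        rintro (a' | m) (b' | m') hadj <;> obtain ⟨⟨hma, hmb, hAdj⟩, hnd⟩ := del_adj_decomp hadj
        · exact Iff.rfl
        · rw [sdg_adj_lr] at hAdj
          have hm'ne := hvne hmb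
          rcases hAdj with ⟨heq2, hj'⟩ | ⟨heq2, hj'⟩
          · show False ↔ (i : ℕ) < (m' : ℕ)
            simp only [false_iff]
            omega
          · exact absurd (by rw [heq2, ← heq, show m' = m0' from Fin.ext (by omega)]) hnd
        · rw [sdg_adj_rl] at hAdj
          have hmne := hvne hma
          rcases hAdj with ⟨heq2, hj'⟩ | ⟨heq2, hj'⟩
          · show (i : ℕ) < (m : ℕ) ↔ False
            simp only [iff_false]
            omega
          · refine absurd ?_ hnd
            rw [heq2, ← heq, show m = m0' from Fin.ext (by omega)]
            exact Sym2.eq_swap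
        · rw [sdg_adj_rr] at hAdj
          have hmne := hvne hma
          have hm'ne := hvne hmb
          show (i : ℕ) < (m : ℕ) ↔ (i : ℕ) < (m' : ℕ)
          omega
      have := reach_cut C key hr
      simp only [hC, Membership.mem, Set.Mem, Sum.elim_inl, Sum.elim_inr] at this
      exact this.mpr (by omega)
  · -- rl witness : reduce to lr by symmetry
    rw [sdg_adj_rl] at hH
    rw [show s((inr m0 : V ⊕ Fin (d-1)), inl v) = s(inl v, inr m0) from Sym2.eq_swap] at hr
    -- reuse : build the lr argument by symmetry.  We inline via the same cut sets.
    have hjne := hvne haS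
    rcases hH with ⟨heq, hj⟩ | ⟨heq, hj⟩
    · set C : Set (V ⊕ Fin (d - 1)) :=
        fun w => Sum.elim (fun _ => False) (fun (n : Fin (d-1)) => (n : ℕ) < (i : ℕ)) w with hC
      have key : ∀ a b, (selg (subdividedGraph G x y d) (T.disjSum (Finset.univ.erase i)) \
          SimpleGraph.fromEdgeSet {s(inl v, inr m0)}).Adj a b → (a ∈ C ↔ b ∈ C) := by
        rintro (a' | m) (b' | m') hadj <;> obtain ⟨⟨hma, hmb, hAdj⟩, hnd⟩ := del_adj_decomp hadj
        · exact Iff.rfl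
        · rw [sdg_adj_lr] at hAdj
          have hm'ne := hvne hmb
          rcases hAdj with ⟨heq2, hj'⟩ | ⟨heq2, hj'⟩
          · exact absurd (by rw [heq2, ← heq, show m' = m0 from Fin.ext (by omega)]) hnd
          · show False ↔ (m' : ℕ) < i
            simp only [false_iff]
            omega
        · rw [sdg_adj_rl] at hAdj
          have hmne := hvne hma
          rcases hAdj with ⟨heq2, hj'⟩ | ⟨heq2, hj'⟩
          · refine absurd ?_ hnd
            rw [heq2, ← heq, show m = m0 from Fin.ext (by omega)]
            exact Sym2.eq_swap
          · show (m : ℕ) < i ↔ False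
            simp only [iff_false]
            omega
        · rw [sdg_adj_rr] at hAdj
          have hmne := hvne hma
          have hm'ne := hvne hmb
          show (m : ℕ) < i ↔ (m' : ℕ) < i
          omega
      have := reach_cut C key hr.symm
      simp only [hC, Membership.mem, Set.Mem, Sum.elim_inl, Sum.elim_inr] at this
      exact this.mpr (by omega)
    · set C : Set (V ⊕ Fin (d - 1)) :=
        fun w => Sum.elim (fun _ => False) (fun (n : Fin (d-1)) => (i : ℕ) < (n : ℕ)) w with hC
      have key : ∀ a b, (selg (subdividedGraph G x y d) (T.disjSum (Finset.univ.erase i)) \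
          SimpleGraph.fromEdgeSet {s(inl v, inr m0)}).Adj a b → (a ∈ C ↔ b ∈ C) := by
        rintro (a' | m) (b' | m') hadj <;> obtain ⟨⟨hma, hmb, hAdj⟩, hnd⟩ := del_adj_decomp hadj
        · exact Iff.rfl
        · rw [sdg_adj_lr] at hAdj
          have hm'ne := hvne hmb
          rcases hAdj with ⟨heq2, hj'⟩ | ⟨heq2, hj'⟩
          · show False ↔ (i : ℕ) < (m' : ℕ)
            simp only [false_iff]
            omega
          · exact absurd (by rw [heq2, ← heq, show m' = m0 from Fin.ext (by omega)]) hnd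
        · rw [sdg_adj_rl] at hAdj
          have hmne := hvne hma
          rcases hAdj with ⟨heq2, hj'⟩ | ⟨heq2, hj'⟩
          · show (i : ℕ) < (m : ℕ) ↔ False
            simp only [iff_false]
            omega
          · refine absurd ?_ hnd
            rw [heq2, ← heq, show m = m0 from Fin.ext (by omega)]
            exact Sym2.eq_swap
        · rw [sdg_adj_rr] at hAdj
          have hmne := hvne hma
          have hm'ne := hvne hmb
          show (i : ℕ) < (m : ℕ) ↔ (i : ℕ) < (m' : ℕ)
          omega
      have := reach_cut C key hr.symm
      simp only [hC, Membership.mem, Set.Mem, Sum.elim_inl, Sum.elim_inr] at this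
      exact this.mpr (by omega)
  · -- rr witness : cut on the interval between the missing vertex and the deleted edge
    rw [sdg_adj_rr] at hH
    have hm0ne := hvne haS
    have hm0'ne := hvne hbS
    have hcut : ∀ (P : ℕ → Prop) (_ : ∀ n, Decidable (P n)),
        (¬ P 0) → (∀ n, (n:ℕ) < d - 1 → n = (d:ℕ) - 2 → ¬ P n) →
        (∀ n n', n + 1 = n' → n' < d - 1 → n ≠ (i:ℕ) → n' ≠ (i:ℕ) →
          ¬((n = (m0:ℕ) ∧ n' = (m0':ℕ)) ∨ (n = (m0':ℕ) ∧ n' = (m0:ℕ))) → (P n ↔ P n')) →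
        (P m0 ↔ P m0') := by
      intro P hdec h0 hlast hstep
      set C : Set (V ⊕ Fin (d - 1)) :=
        fun w => Sum.elim (fun _ => False) (fun (n : Fin (d-1)) => P (n : ℕ)) w with hC
      have key : ∀ a b, (selg (subdividedGraph G x y d) (T.disjSum (Finset.univ.erase i)) \
          SimpleGraph.fromEdgeSet {s(inr m0, inr m0')}).Adj a b → (a ∈ C ↔ b ∈ C) := by
        rintro (a' | m) (b' | m') hadj <;> obtain ⟨⟨hma, hmb, hAdj⟩, hnd⟩ := del_adj_decomp hadj
        · exact Iff.rfl
        · rw [sdg_adj_lr] at hAdj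
          have hm'ne := hvne hmb
          show False ↔ P m'
          rcases hAdj with ⟨heq2, hj'⟩ | ⟨heq2, hj'⟩
          · simp only [false_iff]
            exact fun hc => h0 (by rwa [hj'] at hc)
          · simp only [false_iff]
            exact fun hc => hlast m' m'.isLt hj' hc
        · rw [sdg_adj_rl] at hAdj
          have hmne := hvne hma
          show P m ↔ False
          rcases hAdj with ⟨heq2, hj'⟩ | ⟨heq2, hj'⟩
          · simp only [iff_false]
            exact fun hc => h0 (by rwa [hj'] at hc)
          · simp only [iff_false]
            exact fun hc => hlast m m.isLt hj' hc
        · rw [sdg_adj_rr] at hAdj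
          have hmne := hvne hma
          have hm'ne := hvne hmb
          show P m ↔ P m'
          have hnotdel : ¬(((m:ℕ) = m0 ∧ (m':ℕ) = m0') ∨ ((m:ℕ) = m0' ∧ (m':ℕ) = m0)) := by
            rintro (⟨h1, h2⟩ | ⟨h1, h2⟩)
            · exact hnd (by rw [show m = m0 from Fin.ext h1, show m' = m0' from Fin.ext h2])
            · refine hnd ?_
              rw [show m = m0' from Fin.ext h1, show m' = m0 from Fin.ext h2]
              exact Sym2.eq_swap
          rcases hAdj with hstep1 | hstep1
          · exact hstep m m' hstep1 m'.isLt hmne hm'ne hnotdel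
          · refine (hstep m' m hstep1 m.isLt hm'ne hmne ?_).symm
            intro hc
            exact hnotdel (by tauto)
      have := reach_cut C key hr
      simpa only [hC, Membership.mem, Set.Mem, Sum.elim_inl, Sum.elim_inr] using this
    rcases hH with hij | hij
    · -- m0 + 1 = m0'
      rcases Nat.lt_or_ge (m0' : ℕ) (i : ℕ) with hs | hs
      · have := hcut (fun n => (m0' : ℕ) ≤ n ∧ n < i) (fun n => inferInstance)
          (by omega) (fun n _ hn => by omega) (fun n n' h1 h2 h3 h4 h5 => by omega)
        omega
      · have hs' : (i : ℕ) < (m0 : ℕ) := by omega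
        have := hcut (fun n => (i : ℕ) < n ∧ n ≤ m0) (fun n => inferInstance)
          (by omega) (fun n hn1 hn2 => by omega) (fun n n' h1 h2 h3 h4 h5 => by omega)
        omega
    · -- m0' + 1 = m0
      rcases Nat.lt_or_ge (m0 : ℕ) (i : ℕ) with hs | hs
      · have := hcut (fun n => (m0 : ℕ) ≤ n ∧ n < i) (fun n => inferInstance)
          (by omega) (fun n _ hn => by omega) (fun n n' h1 h2 h3 h4 h5 => by omega)
        omega
      · have hs' : (i : ℕ) < (m0' : ℕ) := by omega
        have := hcut (fun n => (i : ℕ) < n ∧ n ≤ m0') (fun n => inferInstance)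
          (by omega) (fun n hn1 hn2 => by omega) (fun n n' h1 h2 h3 h4 h5 => by omega)
        omega

end MasterB
section Converse
open Sum Finset
variable {V : Type*} [DecidableEq V] {G : SimpleGraph V} {x y : V} {d : ℕ}

/-- If the whole path is present and `x` and `y` are joined in the `G'`-part,
the subdivided graph restricted accordingly has a cycle. -/
lemma nofull (hxy : G.Adj x y) (hd : 2 ≤ d) {T : Finset V}
    (hxT : x ∈ T) (hyT : y ∈ T) {P : Finset (Fin (d - 1))} (hP : ∀ j, j ∈ P)
    (hreach : (selg G T \ SimpleGraph.fromEdgeSet {s(x, y)}).Reachable x y) :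
    ¬(selg (subdividedGraph G x y d) (T.disjSum P)).IsAcyclic := by
  have h0 : 0 < d - 1 := by omega
  have hlast : d - 2 < d - 1 := by omega
  set v0 : Fin (d - 1) := ⟨0, h0⟩ with hv0
  set vl : Fin (d - 1) := ⟨d - 2, hlast⟩ with hvl
  set e : Sym2 (V ⊕ Fin (d - 1)) := s(inl y, inr v0) with he
  set K := selg (subdividedGraph G x y d) (T.disjSum P) with hK
  have c1 : (K \ SimpleGraph.fromEdgeSet {e}).Reachable (inl x) (inl y) := by
    refine reach_map inl (fun a b hab => ?_) hreach
    obtain ⟨⟨haT, hbT, hG⟩, hne⟩ := del_adj_decomp hab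
    exact (selg_del_adj (Finset.inl_mem_disjSum.mpr haT) (Finset.inl_mem_disjSum.mpr hbT)
      (sdg_adj_ll.mpr ⟨hG, hne⟩) sym2_ll_lr).reachable
  have c2 : (K \ SimpleGraph.fromEdgeSet {e}).Adj (inl x) (inr vl) := by
    refine selg_del_adj (Finset.inl_mem_disjSum.mpr hxT) (Finset.inr_mem_disjSum.mpr (hP _))
      (sdg_adj_lr.mpr (Or.inr ⟨rfl, rfl⟩)) (fun hc => hxy.ne (sym2_lr_lr.mp hc).1)
  have c3 : (K \ SimpleGraph.fromEdgeSet {e}).Reachable (inr v0) (inr vl) := by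
    refine chain_reach (fun m h1 => ?_) (d - 2) 0 (by omega) hlast
    exact selg_del_adj (Finset.inr_mem_disjSum.mpr (hP _)) (Finset.inr_mem_disjSum.mpr (hP _))
      (sdg_adj_rr.mpr (Or.inl rfl)) (Ne.symm sym2_lr_rr)
  refine not_isAcyclic_iff.mpr ⟨inl y, inr v0, ?_, ?_⟩
  · exact ⟨Finset.inl_mem_disjSum.mpr hyT, Finset.inr_mem_disjSum.mpr (hP _),
      sdg_adj_lr.mpr (Or.inl ⟨rfl, rfl⟩)⟩
  · exact c1.symm.trans (c2.reachable.trans c3.symm)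

/-- the path detour between `x` and `y`, avoiding a given `ll` deleted edge. -/
lemma detour (hxy : G.Adj x y) (hd : 2 ≤ d) {S : Finset (V ⊕ Fin (d - 1))}
    (hxS : inl x ∈ S) (hyS : inl y ∈ S) (hP : ∀ j : Fin (d - 1), inr j ∈ S) (p q : V) :
    (selg (subdividedGraph G x y d) S \
      SimpleGraph.fromEdgeSet {s(inl p, inl q)}).Reachable (inl x) (inl y) := by
  have h0 : 0 < d - 1 := by omega
  have hlast : d - 2 < d - 1 := by omega
  set v0 : Fin (d - 1) := ⟨0, h0⟩ with hv0
  set vl : Fin (d - 1) := ⟨d - 2, hlast⟩ with hvl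
  have c2 : (selg (subdividedGraph G x y d) S \
      SimpleGraph.fromEdgeSet {s(inl p, inl q)}).Adj (inl x) (inr vl) :=
    selg_del_adj hxS (hP _) (sdg_adj_lr.mpr (Or.inr ⟨rfl, rfl⟩)) (Ne.symm sym2_ll_lr)
  have c3 : (selg (subdividedGraph G x y d) S \
      SimpleGraph.fromEdgeSet {s(inl p, inl q)}).Reachable (inr v0) (inr vl) := by
    refine chain_reach (fun m h1 => ?_) (d - 2) 0 (by omega) hlast
    exact selg_del_adj (hP _) (hP _) (sdg_adj_rr.mpr (Or.inl rfl)) (Ne.symm sym2_ll_rr)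
  have c4 : (selg (subdividedGraph G x y d) S \
      SimpleGraph.fromEdgeSet {s(inl p, inl q)}).Adj (inl y) (inr v0) :=
    selg_del_adj hyS (hP _) (sdg_adj_lr.mpr (Or.inl ⟨rfl, rfl⟩)) (Ne.symm sym2_ll_lr)
  exact c2.reachable.trans (c3.symm.trans c4.reachable.symm)

lemma converseA (hxy : G.Adj x y) (hd : 2 ≤ d) {T : Finset V}
    (hH : (selg (subdividedGraph G x y d) (T.disjSum Finset.univ)).IsAcyclic) :
    (selg G T).IsAcyclic := by
  by_contra hc
  obtain ⟨p, q, hadj, hr⟩ := not_isAcyclic_iff.mp hc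
  obtain ⟨hpT, hqT, hpq⟩ := hadj
  by_cases hpq_xy : s(p, q) = s(x, y)
  · have hxT : x ∈ T := by
      rcases Sym2.eq_iff.mp hpq_xy with ⟨h1, h2⟩ | ⟨h1, h2⟩
      · exact h1 ▸ hpT
      · exact h2 ▸ hqT
    have hyT : y ∈ T := by
      rcases Sym2.eq_iff.mp hpq_xy with ⟨h1, h2⟩ | ⟨h1, h2⟩
      · exact h2 ▸ hqT
      · exact h1 ▸ hpT
    have hrxy : (selg G T \ SimpleGraph.fromEdgeSet {s(x, y)}).Reachable x y := by
      rcases Sym2.eq_iff.mp hpq_xy with ⟨h1, h2⟩ | ⟨h1, h2⟩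
      · rw [← hpq_xy]; exact h1 ▸ h2 ▸ hr
      · rw [← hpq_xy]; exact h1 ▸ h2 ▸ hr.symm
    exact nofull hxy hd hxT hyT (fun j => Finset.mem_univ j) hrxy hH
  · refine not_isAcyclic_iff.mpr ⟨inl p, inl q, ?_, ?_⟩ hH
    · exact ⟨Finset.inl_mem_disjSum.mpr hpT, Finset.inl_mem_disjSum.mpr hqT,
        sdg_adj_ll.mpr ⟨hpq, hpq_xy⟩⟩
    · refine reach_map inl (fun a b hab => ?_) hr
      obtain ⟨⟨haT, hbT, hG⟩, hne⟩ := del_adj_decomp hab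
      by_cases haxy : s(a, b) = s(x, y)
      · have hdet := detour hxy hd (S := T.disjSum Finset.univ)
          (Finset.inl_mem_disjSum.mpr ((Sym2.eq_iff.mp haxy).elim (fun h => h.1 ▸ haT)
            (fun h => h.2 ▸ hbT)))
          (Finset.inl_mem_disjSum.mpr ((Sym2.eq_iff.mp haxy).elim (fun h => h.2 ▸ hbT)
            (fun h => h.1 ▸ haT)))
          (fun j => Finset.inr_mem_disjSum.mpr (Finset.mem_univ j)) p q
        rcases Sym2.eq_iff.mp haxy with ⟨h1, h2⟩ | ⟨h1, h2⟩
        · rw [h1, h2]; exact hdet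
        · rw [h1, h2]; exact hdet.symm
      · exact (selg_del_adj (Finset.inl_mem_disjSum.mpr haT) (Finset.inl_mem_disjSum.mpr hbT)
          (sdg_adj_ll.mpr ⟨hG, haxy⟩) (fun hc' => hne (sym2_ll_ll.mp hc'))).reachable

lemma pullG' {X : Finset V} {P : Finset (Fin (d - 1))}
    (hZ : (selg (subdividedGraph G x y d) (X.disjSum P)).IsAcyclic) :
    (selg G X \ SimpleGraph.fromEdgeSet {s(x, y)}).IsAcyclic := by
  by_contra hc
  obtain ⟨p, q, hadj, hr⟩ := not_isAcyclic_iff.mp hc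
  obtain ⟨⟨hpX, hqX, hpq⟩, hne⟩ := del_adj_decomp hadj
  refine not_isAcyclic_iff.mpr ⟨inl p, inl q, ?_, ?_⟩ hZ
  · exact ⟨Finset.inl_mem_disjSum.mpr hpX, Finset.inl_mem_disjSum.mpr hqX,
      sdg_adj_ll.mpr ⟨hpq, hne⟩⟩
  · refine reach_map inl (fun a b hab => ?_) hr
    obtain ⟨hab1, hnepq⟩ := del_adj_decomp hab
    obtain ⟨⟨haX, hbX, hG⟩, hnexy⟩ := del_adj_decomp hab1
    exact (selg_del_adj (Finset.inl_mem_disjSum.mpr haX) (Finset.inl_mem_disjSum.mpr hbX)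
      (sdg_adj_ll.mpr ⟨hG, hnexy⟩) (fun hc' => hnepq (sym2_ll_ll.mp hc'))).reachable

end Converse
section Main
open Sum Finset
variable {V : Type*} [Fintype V] [DecidableEq V] {G : SimpleGraph V} {x y z : V} {d : ℕ}

lemma insert_inl_disjSum {u : V} {X : Finset V} {P : Finset (Fin (d - 1))} :
    insert (inl u) (X.disjSum P) = (insert u X).disjSum P := by
  ext w
  rcases w with a | b <;> simp

lemma insert_inr_disjSum {j : Fin (d - 1)} {X : Finset V} {P : Finset (Fin (d - 1))} :
    insert (inr j) (X.disjSum P) = X.disjSum (insert j P) := by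
  ext w
  rcases w with a | b <;> simp

lemma disjSum_subset {X X' : Finset V} {P P' : Finset (Fin (d - 1))}
    (h1 : X ⊆ X') (h2 : P ⊆ P') : X.disjSum P ⊆ X'.disjSum P' := by
  intro w hw
  rcases w with a | b
  · exact Finset.inl_mem_disjSum.mpr (h1 (Finset.inl_mem_disjSum.mp hw))
  · exact Finset.inr_mem_disjSum.mpr (h2 (Finset.inr_mem_disjSum.mp hw))

lemma classify (hxy : G.Adj x y) (hd : 2 ≤ d) (hGyz : G.Adj y z)
    (hnbr : ∀ b, G.Adj y b → b = x ∨ b = z)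
    {Z : Finset (V ⊕ Fin (d - 1))}
    (hmax : IsMaximalInducedForest (subdividedGraph G x y d) Z) :
    ∃ M : Finset V, IsMaximalInducedForest G M ∧ Z.card = M.card + (d - 1) := by
  classical
  obtain ⟨hZf, hZm⟩ := maximal_iff_insert.mp hmax
  set X := Finset.univ.filter (fun v : V => inl v ∈ Z) with hX
  set P := Finset.univ.filter (fun j : Fin (d - 1) => inr j ∈ Z) with hP
  have hZeq : Z = X.disjSum P := by
    ext w
    rcases w with u | j <;> simp [hX, hP]
  have hselZ : (selg (subdividedGraph G x y d) (X.disjSum P)).IsAcyclic := by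
    rw [← hZeq]; exact forest_iff_sel.mp hZf
  by_cases hXf : IsInducedForest G X
  · -- Case A : all interior vertices must be present, X is maximal
    have hPuniv : P = Finset.univ := by
      by_contra hne
      obtain ⟨i, hiP⟩ : ∃ i, i ∉ P := by
        by_contra hall
        push_neg at hall
        exact hne (Finset.eq_univ_iff_forall.mpr hall)
      refine hZm (inr i) (by rw [hZeq]; simp [hiP]) ?_
      refine forest_mono ?_
        (forest_iff_sel.mpr (masterA hxy (forest_iff_sel.mp hXf) (P := Finset.univ)))
      rw [hZeq, insert_inr_disjSum]
      exact disjSum_subset (Finset.Subset.refl _) (Finset.subset_univ _)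
    have hXmax : IsMaximalInducedForest G X := by
      refine maximal_iff_insert.mpr ⟨hXf, fun u hu hf => ?_⟩
      refine hZm (inl u) (by rw [hZeq]; simp [hu]) ?_
      have := forest_iff_sel.mpr (masterA hxy (forest_iff_sel.mp hf)
        (P := (Finset.univ : Finset (Fin (d - 1)))))
      rwa [hZeq, hPuniv, insert_inl_disjSum]
    exact ⟨X, hXmax, by
      rw [hZeq, hPuniv, Finset.card_disjSum, Finset.card_univ, Fintype.card_fin]⟩
  · -- Case B
    have hX'f : (selg G X \ SimpleGraph.fromEdgeSet {s(x, y)}).IsAcyclic := pullG' hselZ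
    have hnotX : ¬(selg G X).IsAcyclic := fun h => hXf (forest_iff_sel.mpr h)
    have hxyX : x ∈ X ∧ y ∈ X := by
      by_contra hcon
      apply hnotX
      refine isAcyclic_mono (fun a b hab => ?_) hX'f
      obtain ⟨haX, hbX, hG⟩ := hab
      refine selg_del_adj haX hbX hG (fun hc => hcon ?_)
      rcases Sym2.eq_iff.mp hc with ⟨h1, h2⟩ | ⟨h1, h2⟩
      · exact ⟨h1 ▸ haX, h2 ▸ hbX⟩
      · exact ⟨h2 ▸ hbX, h1 ▸ haX⟩
    have hreach : (selg G X \ SimpleGraph.fromEdgeSet {s(x, y)}).Reachable x y := by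
      refine reach_of_add_edge hX'f hxy.ne ?_
      intro hsup
      apply hnotX
      refine isAcyclic_mono (fun a b hab => ?_) hsup
      obtain ⟨haX, hbX, hG⟩ := hab
      by_cases hc : s(a, b) = s(x, y)
      · exact Or.inr ((SimpleGraph.fromEdgeSet_adj _).mpr ⟨Set.mem_singleton_iff.mpr hc, hG.ne⟩)
      · exact Or.inl (selg_del_adj haX hbX hG hc)
    obtain ⟨i, hiP⟩ : ∃ i, i ∉ P := by
      by_contra hall
      push_neg at hall
      exact nofull hxy hd hxyX.1 hxyX.2 hall hreach hselZ
    have hMf : IsInducedForest G (X.erase y) := by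
      rw [forest_iff_sel]
      refine isAcyclic_mono (fun a b hab => ?_) hX'f
      obtain ⟨haX, hbX, hG⟩ := hab
      refine selg_del_adj (Finset.mem_of_mem_erase haX) (Finset.mem_of_mem_erase hbX) hG
        (fun hc => ?_)
      rcases Sym2.eq_iff.mp hc with ⟨h1, h2⟩ | ⟨h1, h2⟩
      · exact (Finset.mem_erase.mp hbX).1 h2
      · exact (Finset.mem_erase.mp haX).1 h1
    have hselG' := forest_iff_sel.mp hMf
    have hPs : P ⊆ Finset.univ.erase i :=
      fun j hj => Finset.mem_erase.mpr ⟨fun h => hiP (h ▸ hj), Finset.mem_univ _⟩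
    have hPfull : P = Finset.univ.erase i := by
      refine Finset.Subset.antisymm hPs (fun j hj => ?_)
      by_contra hjP
      refine hZm (inr j) (by rw [hZeq]; simp [hjP]) ?_
      refine forest_mono ?_
        (forest_iff_sel.mpr (masterB (T := X) (i := i) hxy hGyz hnbr hselG'))
      rw [hZeq, insert_inr_disjSum]
      refine disjSum_subset (Finset.Subset.refl _) ?_
      intro k hk
      rcases Finset.mem_insert.mp hk with rfl | hk
      · exact hj
      · exact hPs hk
    have hymem : y ∈ X := hxyX.2
    have hMmax : IsMaximalInducedForest G (X.erase y) := by
      refine maximal_iff_insert.mpr ⟨hMf, fun u hu hf => ?_⟩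
      by_cases huy : u = y
      · subst huy
        rw [Finset.insert_erase hymem] at hf
        exact hXf hf
      · have huX : u ∉ X := fun hc => hu (Finset.mem_erase.mpr ⟨huy, hc⟩)
        rw [← Finset.erase_insert_of_ne huy] at hf
        refine hZm (inl u) (by rw [hZeq]; simp [huX]) ?_
        refine forest_mono ?_ (forest_iff_sel.mpr
          (masterB (T := insert u X) (i := i) hxy hGyz hnbr (forest_iff_sel.mp hf)))
        rw [hZeq, insert_inl_disjSum]
        exact disjSum_subset (Finset.Subset.refl _) hPs
    refine ⟨X.erase y, hMmax, ?_⟩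
    have h1 : Z.card = X.card + P.card := by rw [hZeq, Finset.card_disjSum]
    have h2 : P.card = (d - 1) - 1 := by
      rw [hPfull, Finset.card_erase_of_mem (Finset.mem_univ i), Finset.card_univ,
        Fintype.card_fin]
    have h3 : (X.erase y).card = X.card - 1 := Finset.card_erase_of_mem hymem
    have h4 : 1 ≤ X.card := Finset.card_pos.mpr ⟨y, hymem⟩
    omega

lemma maximal_image (hxy : G.Adj x y) (hd : 2 ≤ d) {X : Finset V}
    (hmax : IsMaximalInducedForest G X) :
    IsMaximalInducedForest (subdividedGraph G x y d)
      (X.disjSum (Finset.univ : Finset (Fin (d - 1)))) := by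
  obtain ⟨hXf, hXm⟩ := maximal_iff_insert.mp hmax
  refine maximal_iff_insert.mpr
    ⟨forest_iff_sel.mpr (masterA hxy (forest_iff_sel.mp hXf)), ?_⟩
  rintro (u | j) hw hf
  · have huX : u ∉ X := fun h => hw (Finset.inl_mem_disjSum.mpr h)
    refine hXm u huX ?_
    refine forest_iff_sel.mpr (converseA hxy hd (T := insert u X) ?_)
    rw [forest_iff_sel, insert_inl_disjSum] at hf
    exact hf
  · exact hw (Finset.inr_mem_disjSum.mpr (Finset.mem_univ j))

end Main
/-- If `x` and `y` are adjacent in `G`, `y` has degree 2, and `d ≥ 2`,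
then the graph `G*` obtained by replacing the edge `{x,y}` by a path of length `d`
with new interior vertices is well-f-covered iff `G` is, and in either case
`f(G*) = f(G) + d - 1`. -/
theorem stmt9 {V : Type*} [Fintype V] [DecidableEq V] (G : SimpleGraph V)
    [DecidableRel G.Adj] (x y : V) (hxy : G.Adj x y) (hdeg : G.degree y = 2)
    (d : ℕ) (hd : 2 ≤ d) :
    (WellFCovered (subdividedGraph G x y d) ↔ WellFCovered G) ∧
      forestNum (subdividedGraph G x y d) = forestNum G + d - 1 := by
  classical
  -- extract the second neighbour z of y
  obtain ⟨a, b, hab, hset⟩ := Finset.card_eq_two.mp hdeg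
  have hx_nb : x ∈ G.neighborFinset y := by
    rw [SimpleGraph.mem_neighborFinset]
    exact hxy.symm
  have hmem_iff : ∀ w, G.Adj y w ↔ (w = a ∨ w = b) := by
    intro w
    rw [← SimpleGraph.mem_neighborFinset, hset, Finset.mem_insert, Finset.mem_singleton]
  obtain ⟨z, hGyz, hnbr⟩ : ∃ z, G.Adj y z ∧ ∀ b', G.Adj y b' → b' = x ∨ b' = z := by
    rw [hset, Finset.mem_insert, Finset.mem_singleton] at hx_nb
    rcases hx_nb with rfl | rfl
    · exact ⟨b, (hmem_iff b).mpr (Or.inr rfl), fun b' hb' => (hmem_iff b').mp hb'⟩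
    · refine ⟨a, (hmem_iff a).mpr (Or.inl rfl), fun b' hb' => ?_⟩
      rcases (hmem_iff b').mp hb' with h | h
      · exact Or.inr h
      · exact Or.inl h
  constructor
  · -- well-f-covered equivalence
    constructor
    · intro hH X Y hX hY
      have := hH _ _ (maximal_image hxy hd hX) (maximal_image hxy hd hY)
      rw [Finset.card_disjSum, Finset.card_disjSum] at this
      omega
    · intro hG Z Z' hZ hZ'
      obtain ⟨M, hM, hc⟩ := classify hxy hd hGyz hnbr hZ
      obtain ⟨M', hM', hc'⟩ := classify hxy hd hGyz hnbr hZ'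
      rw [hc, hc', hG M M' hM hM']
  · -- forest number
    have hub : forestNum (subdividedGraph G x y d) ≤ forestNum G + (d - 1) := by
      obtain ⟨Z0, hZ0f, hZ0c⟩ := exists_forestNum (subdividedGraph G x y d)
      obtain ⟨Z1, hsub, hZ1max, hcard⟩ := exists_maximal_forest hZ0f
      obtain ⟨M, hMmax, hMc⟩ := classify hxy hd hGyz hnbr hZ1max
      have hMle := le_forestNum hMmax.1
      omega
    have hlb : forestNum G + (d - 1) ≤ forestNum (subdividedGraph G x y d) := by
      obtain ⟨X0, hX0f, hX0c⟩ := exists_forestNum G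
      have := le_forestNum (forest_iff_sel.mpr (masterA hxy (forest_iff_sel.mp hX0f)
        (P := (Finset.univ : Finset (Fin (d - 1))))))
      rw [Finset.card_disjSum, Finset.card_univ, Fintype.card_fin] at this
      omega
    omega
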